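/- Let H(x) = tanh(x/√2), λ₀ = i·√(3/2) ∈ ℂ, and fix a sign ε ∈ {+1, −1}. Let φ̃, ψ̃ : ℝ × ℝ → ℂ be C² functions satisfying, for all (t,x), the system ∂_x φ̃ − ∂_t ψ̃ = −(1/√2)·H(x)·φ̃ − ε·λ₀·ψ̃ and ∂_t φ̃ − ∂_x ψ̃ = −(1/√2)·H(x)·ψ̃ − ε·λ₀·φ̃. Then ∂_t² φ̃ − ∂_x² φ̃ + (1 + H(x)²)·φ̃ = 0 (i.e., φ̃_tt + 𝓛̃_H φ̃ = 0) and ∂_t² ψ̃ − ∂_x² ψ̃ + 2·ψ̃ = 0. -/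

import Mathlib

/-- The φ⁴ kink. -/
noncomputable def phi4Kink (x : ℝ) : ℝ := Real.tanh (x / Real.sqrt 2)

section aux
variable {E : Type*} [NormedAddCommGroup E] [NormedSpace ℝ E]

lemma slice1 {F : ℝ × ℝ → E} {t x : ℝ} (hF : DifferentiableAt ℝ F (t, x)) :
    HasDerivAt (fun t' => F (t', x)) (fderiv ℝ F (t, x) (1, 0)) t := by
  have h := hF.hasFDerivAt.comp_hasDerivAt t (HasDerivAt.prodMk (hasDerivAt_id t) (hasDerivAt_const t x))
  exact h

lemma slice2 {F : ℝ × ℝ → E} {t x : ℝ} (hF : DifferentiableAt ℝ F (t, x)) :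
    HasDerivAt (fun x' => F (t, x')) (fderiv ℝ F (t, x) (0, 1)) x := by
  have h := hF.hasFDerivAt.comp_hasDerivAt x (HasDerivAt.prodMk (hasDerivAt_const x t) (hasDerivAt_id x))
  exact h

lemma slice1_apply {F : ℝ × ℝ → (ℝ × ℝ) →L[ℝ] ℂ} {t x : ℝ}
    (hF : DifferentiableAt ℝ F (t, x)) (v : ℝ × ℝ) :
    HasDerivAt (fun t' => F (t', x) v) (fderiv ℝ F (t, x) (1, 0) v) t := by
  have h := (slice1 hF).clm_apply (hasDerivAt_const t v)
  simpa using h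

lemma slice2_apply {F : ℝ × ℝ → (ℝ × ℝ) →L[ℝ] ℂ} {t x : ℝ}
    (hF : DifferentiableAt ℝ F (t, x)) (v : ℝ × ℝ) :
    HasDerivAt (fun x' => F (t, x') v) (fderiv ℝ F (t, x) (0, 1) v) x := by
  have h := (slice2 hF).clm_apply (hasDerivAt_const x v)
  simpa using h

lemma hasDerivAt_kink (x : ℝ) :
    HasDerivAt phi4Kink ((1 - phi4Kink x ^ 2) * (1 / Real.sqrt 2)) x := by
  have htanh : HasDerivAt Real.tanh (1 - Real.tanh (x / Real.sqrt 2) ^ 2) (x / Real.sqrt 2) := by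
    have h := (Real.hasDerivAt_sinh (x / Real.sqrt 2)).div
      (Real.hasDerivAt_cosh (x / Real.sqrt 2)) (Real.cosh_pos _).ne'
    have h2 : HasDerivAt (fun y => Real.sinh y / Real.cosh y)
        (1 - Real.tanh (x / Real.sqrt 2) ^ 2) (x / Real.sqrt 2) := by
      refine h.congr_deriv ?_
      rw [Real.tanh_eq_sinh_div_cosh]
      have hc := (Real.cosh_pos (x / Real.sqrt 2)).ne'
      field_simp
    exact h2.congr_of_eventuallyEq
      (Filter.Eventually.of_forall fun y => Real.tanh_eq_sinh_div_cosh y)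
  have hlin : HasDerivAt (fun y : ℝ => y / Real.sqrt 2) (1 / Real.sqrt 2) x := by
    simpa using (hasDerivAt_id x).div_const (Real.sqrt 2)
  exact htanh.comp x hlin

end aux

/-- Complex solutions of the second linearized Bäcklund system for φ⁴,
with lam₀ = i√(3/2), satisfy φ̃_tt + 𝓛̃_H φ̃ = 0 and the free Klein-Gordon equation
ψ̃_tt − ψ̃_xx + 2ψ̃ = 0. -/
theorem second_linearized_backlund_phi4
    (ε : ℝ) (hε : ε = 1 ∨ ε = -1)
    (lam₀ : ℂ) (hlam₀ : lam₀ = Complex.I * (Real.sqrt (3 / 2) : ℂ))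
    (φ ψ : ℝ → ℝ → ℂ)
    (hφ : ContDiff ℝ 2 (fun p : ℝ × ℝ => φ p.1 p.2))
    (hψ : ContDiff ℝ 2 (fun p : ℝ × ℝ => ψ p.1 p.2))
    (h1 : ∀ t x : ℝ,
      deriv (fun x' => φ t x') x - deriv (fun t' => ψ t' x) t
        = -(1 / Real.sqrt 2 : ℝ) * (phi4Kink x : ℂ) * φ t x - (ε : ℂ) * lam₀ * ψ t x)
    (h2 : ∀ t x : ℝ,
      deriv (fun t' => φ t' x) t - deriv (fun x' => ψ t x') x
        = -(1 / Real.sqrt 2 : ℝ) * (phi4Kink x : ℂ) * ψ t x - (ε : ℂ) * lam₀ * φ t x) :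
    (∀ t x : ℝ,
      deriv (fun t' => deriv (fun t'' => φ t'' x) t') t
        - deriv (fun x' => deriv (fun x'' => φ t x'') x') x
        + ((1 + (phi4Kink x) ^ 2 : ℝ) : ℂ) * φ t x = 0)
    ∧ (∀ t x : ℝ,
      deriv (fun t' => deriv (fun t'' => ψ t'' x) t') t
        - deriv (fun x' => deriv (fun x'' => ψ t x'') x') x
        + 2 * ψ t x = 0) := by
  set Φ := fun p : ℝ × ℝ => φ p.1 p.2 with hΦdef
  set Ψ := fun p : ℝ × ℝ => ψ p.1 p.2 with hΨdef
  have hΦd : Differentiable ℝ Φ := hφ.differentiable two_ne_zero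
  have hΨd : Differentiable ℝ Ψ := hψ.differentiable two_ne_zero
  have hAd : Differentiable ℝ (fderiv ℝ Φ) :=
    (hφ.fderiv_right le_rfl).differentiable one_ne_zero
  have hBd : Differentiable ℝ (fderiv ℝ Ψ) :=
    (hψ.fderiv_right le_rfl).differentiable one_ne_zero
  -- first partial derivatives
  have dtφ : ∀ t x : ℝ, deriv (fun t' => φ t' x) t = fderiv ℝ Φ (t, x) (1, 0) :=
    fun t x => (slice1 (hΦd (t, x))).deriv
  have dxφ : ∀ t x : ℝ, deriv (fun x' => φ t x') x = fderiv ℝ Φ (t, x) (0, 1) :=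
    fun t x => (slice2 (hΦd (t, x))).deriv
  have dtψ : ∀ t x : ℝ, deriv (fun t' => ψ t' x) t = fderiv ℝ Ψ (t, x) (1, 0) :=
    fun t x => (slice1 (hΨd (t, x))).deriv
  have dxψ : ∀ t x : ℝ, deriv (fun x' => ψ t x') x = fderiv ℝ Ψ (t, x) (0, 1) :=
    fun t x => (slice2 (hΨd (t, x))).deriv
  -- the Bäcklund system in fderiv form
  have H1 : ∀ t x : ℝ, fderiv ℝ Φ (t, x) (0, 1) - fderiv ℝ Ψ (t, x) (1, 0)
      = -(1 / Real.sqrt 2 : ℝ) * (phi4Kink x : ℂ) * φ t x - (ε : ℂ) * lam₀ * ψ t x :=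
    fun t x => by rw [← dxφ t x, ← dtψ t x]; exact h1 t x
  have H2 : ∀ t x : ℝ, fderiv ℝ Φ (t, x) (1, 0) - fderiv ℝ Ψ (t, x) (0, 1)
      = -(1 / Real.sqrt 2 : ℝ) * (phi4Kink x : ℂ) * ψ t x - (ε : ℂ) * lam₀ * φ t x :=
    fun t x => by rw [← dtφ t x, ← dxψ t x]; exact h2 t x
  -- differentiated equations
  have E1t : ∀ t x : ℝ,
      fderiv ℝ (fderiv ℝ Φ) (t, x) (1, 0) (0, 1) - fderiv ℝ (fderiv ℝ Ψ) (t, x) (1, 0) (1, 0)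
        = -(1 / Real.sqrt 2 : ℝ) * (phi4Kink x : ℂ) * fderiv ℝ Φ (t, x) (1, 0)
          - (ε : ℂ) * lam₀ * fderiv ℝ Ψ (t, x) (1, 0) := by
    intro t x
    have hL : HasDerivAt (fun t' => fderiv ℝ Φ (t', x) (0, 1) - fderiv ℝ Ψ (t', x) (1, 0))
        (fderiv ℝ (fderiv ℝ Φ) (t, x) (1, 0) (0, 1)
          - fderiv ℝ (fderiv ℝ Ψ) (t, x) (1, 0) (1, 0)) t :=
      (slice1_apply (hAd (t, x)) _).sub (slice1_apply (hBd (t, x)) _)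
    have hR : HasDerivAt
        (fun t' => -(1 / Real.sqrt 2 : ℝ) * (phi4Kink x : ℂ) * φ t' x - (ε : ℂ) * lam₀ * ψ t' x)
        (-(1 / Real.sqrt 2 : ℝ) * (phi4Kink x : ℂ) * fderiv ℝ Φ (t, x) (1, 0)
          - (ε : ℂ) * lam₀ * fderiv ℝ Ψ (t, x) (1, 0)) t :=
      ((slice1 (hΦd (t, x))).const_mul _).sub ((slice1 (hΨd (t, x))).const_mul _)
    exact hL.unique
      (hR.congr_of_eventuallyEq (Filter.Eventually.of_forall fun t' => H1 t' x))
  have E2t : ∀ t x : ℝ,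
      fderiv ℝ (fderiv ℝ Φ) (t, x) (1, 0) (1, 0) - fderiv ℝ (fderiv ℝ Ψ) (t, x) (1, 0) (0, 1)
        = -(1 / Real.sqrt 2 : ℝ) * (phi4Kink x : ℂ) * fderiv ℝ Ψ (t, x) (1, 0)
          - (ε : ℂ) * lam₀ * fderiv ℝ Φ (t, x) (1, 0) := by
    intro t x
    have hL : HasDerivAt (fun t' => fderiv ℝ Φ (t', x) (1, 0) - fderiv ℝ Ψ (t', x) (0, 1))
        (fderiv ℝ (fderiv ℝ Φ) (t, x) (1, 0) (1, 0)
          - fderiv ℝ (fderiv ℝ Ψ) (t, x) (1, 0) (0, 1)) t :=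
      (slice1_apply (hAd (t, x)) _).sub (slice1_apply (hBd (t, x)) _)
    have hR : HasDerivAt
        (fun t' => -(1 / Real.sqrt 2 : ℝ) * (phi4Kink x : ℂ) * ψ t' x - (ε : ℂ) * lam₀ * φ t' x)
        (-(1 / Real.sqrt 2 : ℝ) * (phi4Kink x : ℂ) * fderiv ℝ Ψ (t, x) (1, 0)
          - (ε : ℂ) * lam₀ * fderiv ℝ Φ (t, x) (1, 0)) t :=
      ((slice1 (hΨd (t, x))).const_mul _).sub ((slice1 (hΦd (t, x))).const_mul _)
    exact hL.unique
      (hR.congr_of_eventuallyEq (Filter.Eventually.of_forall fun t' => H2 t' x))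
  -- derivative of the coefficient
  have haC : ∀ x : ℝ, HasDerivAt (fun x' => -(1 / Real.sqrt 2 : ℝ) * (phi4Kink x' : ℂ))
      (-(1 / Real.sqrt 2 : ℝ) * (((1 - phi4Kink x ^ 2) * (1 / Real.sqrt 2) : ℝ) : ℂ)) x :=
    fun x => ((hasDerivAt_kink x).ofReal_comp).const_mul _
  have E1x : ∀ t x : ℝ,
      fderiv ℝ (fderiv ℝ Φ) (t, x) (0, 1) (0, 1) - fderiv ℝ (fderiv ℝ Ψ) (t, x) (0, 1) (1, 0)
        = -(1 / Real.sqrt 2 : ℝ) * (((1 - phi4Kink x ^ 2) * (1 / Real.sqrt 2) : ℝ) : ℂ) * φ t x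
          + -(1 / Real.sqrt 2 : ℝ) * (phi4Kink x : ℂ) * fderiv ℝ Φ (t, x) (0, 1)
          - (ε : ℂ) * lam₀ * fderiv ℝ Ψ (t, x) (0, 1) := by
    intro t x
    have hL : HasDerivAt (fun x' => fderiv ℝ Φ (t, x') (0, 1) - fderiv ℝ Ψ (t, x') (1, 0))
        (fderiv ℝ (fderiv ℝ Φ) (t, x) (0, 1) (0, 1)
          - fderiv ℝ (fderiv ℝ Ψ) (t, x) (0, 1) (1, 0)) x :=
      (slice2_apply (hAd (t, x)) _).sub (slice2_apply (hBd (t, x)) _)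
    have hR : HasDerivAt
        (fun x' => -(1 / Real.sqrt 2 : ℝ) * (phi4Kink x' : ℂ) * φ t x' - (ε : ℂ) * lam₀ * ψ t x')
        (-(1 / Real.sqrt 2 : ℝ) * (((1 - phi4Kink x ^ 2) * (1 / Real.sqrt 2) : ℝ) : ℂ) * φ t x
          + -(1 / Real.sqrt 2 : ℝ) * (phi4Kink x : ℂ) * fderiv ℝ Φ (t, x) (0, 1)
          - (ε : ℂ) * lam₀ * fderiv ℝ Ψ (t, x) (0, 1)) x :=
      ((haC x).mul (slice2 (hΦd (t, x)))).sub ((slice2 (hΨd (t, x))).const_mul _)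
    exact hL.unique
      (hR.congr_of_eventuallyEq (Filter.Eventually.of_forall fun x' => H1 t x'))
  have E2x : ∀ t x : ℝ,
      fderiv ℝ (fderiv ℝ Φ) (t, x) (0, 1) (1, 0) - fderiv ℝ (fderiv ℝ Ψ) (t, x) (0, 1) (0, 1)
        = -(1 / Real.sqrt 2 : ℝ) * (((1 - phi4Kink x ^ 2) * (1 / Real.sqrt 2) : ℝ) : ℂ) * ψ t x
          + -(1 / Real.sqrt 2 : ℝ) * (phi4Kink x : ℂ) * fderiv ℝ Ψ (t, x) (0, 1)
          - (ε : ℂ) * lam₀ * fderiv ℝ Φ (t, x) (0, 1) := by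
    intro t x
    have hL : HasDerivAt (fun x' => fderiv ℝ Φ (t, x') (1, 0) - fderiv ℝ Ψ (t, x') (0, 1))
        (fderiv ℝ (fderiv ℝ Φ) (t, x) (0, 1) (1, 0)
          - fderiv ℝ (fderiv ℝ Ψ) (t, x) (0, 1) (0, 1)) x :=
      (slice2_apply (hAd (t, x)) _).sub (slice2_apply (hBd (t, x)) _)
    have hR : HasDerivAt
        (fun x' => -(1 / Real.sqrt 2 : ℝ) * (phi4Kink x' : ℂ) * ψ t x' - (ε : ℂ) * lam₀ * φ t x')
        (-(1 / Real.sqrt 2 : ℝ) * (((1 - phi4Kink x ^ 2) * (1 / Real.sqrt 2) : ℝ) : ℂ) * ψ t x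
          + -(1 / Real.sqrt 2 : ℝ) * (phi4Kink x : ℂ) * fderiv ℝ Ψ (t, x) (0, 1)
          - (ε : ℂ) * lam₀ * fderiv ℝ Φ (t, x) (0, 1)) x :=
      ((haC x).mul (slice2 (hΨd (t, x)))).sub ((slice2 (hΦd (t, x))).const_mul _)
    exact hL.unique
      (hR.congr_of_eventuallyEq (Filter.Eventually.of_forall fun x' => H2 t x'))
  -- symmetry of second derivatives
  have symA : ∀ t x : ℝ, fderiv ℝ (fderiv ℝ Φ) (t, x) (1, 0) (0, 1)
      = fderiv ℝ (fderiv ℝ Φ) (t, x) (0, 1) (1, 0) :=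
    fun t x => (hφ.contDiffAt.isSymmSndFDerivAt (by simp)) (1, 0) (0, 1)
  have symB : ∀ t x : ℝ, fderiv ℝ (fderiv ℝ Ψ) (t, x) (1, 0) (0, 1)
      = fderiv ℝ (fderiv ℝ Ψ) (t, x) (0, 1) (1, 0) :=
    fun t x => (hψ.contDiffAt.isSymmSndFDerivAt (by simp)) (1, 0) (0, 1)
  -- rewriting the second derivatives in the goal
  have Gttφ : ∀ t x : ℝ, deriv (fun t' => deriv (fun t'' => φ t'' x) t') t
      = fderiv ℝ (fderiv ℝ Φ) (t, x) (1, 0) (1, 0) := by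
    intro t x
    have hfun : (fun t' => deriv (fun t'' => φ t'' x) t')
        = fun t' => fderiv ℝ Φ (t', x) (1, 0) := funext fun t' => dtφ t' x
    rw [hfun]
    exact (slice1_apply (hAd (t, x)) _).deriv
  have Gxxφ : ∀ t x : ℝ, deriv (fun x' => deriv (fun x'' => φ t x'') x') x
      = fderiv ℝ (fderiv ℝ Φ) (t, x) (0, 1) (0, 1) := by
    intro t x
    have hfun : (fun x' => deriv (fun x'' => φ t x'') x')
        = fun x' => fderiv ℝ Φ (t, x') (0, 1) := funext fun x' => dxφ t x'
    rw [hfun]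
    exact (slice2_apply (hAd (t, x)) _).deriv
  have Gttψ : ∀ t x : ℝ, deriv (fun t' => deriv (fun t'' => ψ t'' x) t') t
      = fderiv ℝ (fderiv ℝ Ψ) (t, x) (1, 0) (1, 0) := by
    intro t x
    have hfun : (fun t' => deriv (fun t'' => ψ t'' x) t')
        = fun t' => fderiv ℝ Ψ (t', x) (1, 0) := funext fun t' => dtψ t' x
    rw [hfun]
    exact (slice1_apply (hBd (t, x)) _).deriv
  have Gxxψ : ∀ t x : ℝ, deriv (fun x' => deriv (fun x'' => ψ t x'') x') x
      = fderiv ℝ (fderiv ℝ Ψ) (t, x) (0, 1) (0, 1) := by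
    intro t x
    have hfun : (fun x' => deriv (fun x'' => ψ t x'') x')
        = fun x' => fderiv ℝ Ψ (t, x') (0, 1) := funext fun x' => dxψ t x'
    rw [hfun]
    exact (slice2_apply (hBd (t, x)) _).deriv
  -- numeric facts
  have hc2 : ((ε : ℂ) * lam₀) * ((ε : ℂ) * lam₀) = -(3 / 2) := by
    have hs : ((Real.sqrt (3 / 2) : ℝ) : ℂ) * ((Real.sqrt (3 / 2) : ℝ) : ℂ) = (3 / 2 : ℂ) := by
      norm_cast
      rw [Real.mul_self_sqrt] <;> norm_num
    rcases hε with h | h <;> subst h <;> rw [hlam₀] <;> push_cast <;>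
      linear_combination Complex.I ^ 2 * hs + (3 / 2 : ℂ) * Complex.I_sq
  have hu2 : ((1 / Real.sqrt 2 : ℝ) : ℂ) * ((1 / Real.sqrt 2 : ℝ) : ℂ) = 1 / 2 := by
    norm_cast
    rw [div_mul_div_comm, Real.mul_self_sqrt] <;> norm_num
  refine ⟨fun t x => ?_, fun t x => ?_⟩
  · rw [Gttφ, Gxxφ]
    have ha2 : (-(1 / Real.sqrt 2 : ℝ) * (phi4Kink x : ℂ))
        * (-(1 / Real.sqrt 2 : ℝ) * (phi4Kink x : ℂ)) = (phi4Kink x : ℂ) ^ 2 / 2 := by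
      linear_combination (phi4Kink x : ℂ) ^ 2 * hu2
    have ha' : -(1 / Real.sqrt 2 : ℝ) * (((1 - phi4Kink x ^ 2) * (1 / Real.sqrt 2) : ℝ) : ℂ)
        = -(1 - (phi4Kink x : ℂ) ^ 2) / 2 := by
      rw [Complex.ofReal_mul, Complex.ofReal_sub, Complex.ofReal_one, Complex.ofReal_pow]
      linear_combination (-(1 : ℂ) + (phi4Kink x : ℂ) ^ 2) * hu2
    have hg : ((1 + (phi4Kink x) ^ 2 : ℝ) : ℂ) = 1 + (phi4Kink x : ℂ) ^ 2 := by push_cast; ring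
    linear_combination E2t t x - E1x t x + symB t x
      - (-(1 / Real.sqrt 2 : ℝ) * (phi4Kink x : ℂ)) * H1 t x
      - ((ε : ℂ) * lam₀) * H2 t x
      + (φ t x) * hc2 - (φ t x) * ha2 - (φ t x) * ha' + (φ t x) * hg
  · rw [Gttψ, Gxxψ]
    have ha2 : (-(1 / Real.sqrt 2 : ℝ) * (phi4Kink x : ℂ))
        * (-(1 / Real.sqrt 2 : ℝ) * (phi4Kink x : ℂ)) = (phi4Kink x : ℂ) ^ 2 / 2 := by
      linear_combination (phi4Kink x : ℂ) ^ 2 * hu2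
    have ha' : -(1 / Real.sqrt 2 : ℝ) * (((1 - phi4Kink x ^ 2) * (1 / Real.sqrt 2) : ℝ) : ℂ)
        = -(1 - (phi4Kink x : ℂ) ^ 2) / 2 := by
      rw [Complex.ofReal_mul, Complex.ofReal_sub, Complex.ofReal_one, Complex.ofReal_pow]
      linear_combination (-(1 : ℂ) + (phi4Kink x : ℂ) ^ 2) * hu2
    linear_combination E2x t x - E1t t x + symA t x
      - (-(1 / Real.sqrt 2 : ℝ) * (phi4Kink x : ℂ)) * H2 t x
      - ((ε : ℂ) * lam₀) * H1 t x
      + (ψ t x) * hc2 + (ψ t x) * ha' - (ψ t x) * ha2
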